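/- If A is an irreducible nonnegative n×n matrix that is weight-balanced and its row-normalization φ(A) is doubly stochastic, then the minimum row sum equals all other row sums; equivalently, it is impossible that some row sum is strictly smaller than all the others. -/

import Mathlib

/-- If `A` is irreducible, nonnegative, weight-balanced, has positive row sums
and its row normalization has all column sums equal to 1, then the minimum row
sum equals all the other row sums (so no row sum can be strictly smaller than
all others). -/
theorem min_row_sum_eq_all {n : ℕ} (A : Matrix (Fin n) (Fin n) ℝ)
    (hnn : ∀ i j, 0 ≤ A i j)
    (hirr : ∀ J : Finset (Fin n), J ≠ ∅ → J ≠ Finset.univ →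
      ∃ j ∈ J, ∃ k ∈ Jᶜ, A j k ≠ 0)
    (hwb : ∀ i, ∑ j, A i j = ∑ j, A j i)
    (hpos : ∀ k, 0 < ∑ l, A k l)
    (hcol : ∀ j, ∑ i, A i j / (∑ l, A i l) = 1) :
    ∀ i, (∀ k, ∑ l, A i l ≤ ∑ l, A k l) → ∀ k, ∑ l, A k l = ∑ l, A i l := by
  intro i hmin
  set m : ℝ := ∑ l, A i l with hm
  have hmpos : 0 < m := hpos i
  -- key: if row j has minimal sum, then any k with A k j ≠ 0 also has minimal sum
  have key : ∀ j, (∑ l, A j l) = m → ∀ k, A k j ≠ 0 → (∑ l, A k l) = m := by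
    intro j hj k hk
    have hle : ∀ k ∈ Finset.univ, A k j / (∑ l, A k l) ≤ A k j / m := by
      intro k _
      gcongr
      · exact hnn k j
      · exact hmin k
    have hsum2 : ∑ k, A k j / m = 1 := by
      rw [← Finset.sum_div]
      have hcj : ∑ l, A l j = m := (hwb j).symm.trans hj
      rw [hcj, div_self hmpos.ne']
    have heq : ∀ k ∈ Finset.univ, A k j / (∑ l, A k l) = A k j / m := by
      rw [← Finset.sum_eq_sum_iff_of_le hle]
      rw [hcol j, hsum2]
    have h := heq k (Finset.mem_univ k)
    have hAk : 0 < A k j := lt_of_le_of_ne (hnn k j) (Ne.symm hk)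
    have h2 := (div_eq_div_iff (hpos k).ne' hmpos.ne').mp h
    exact (mul_left_cancel₀ hAk.ne' h2).symm
  by_contra hcon
  push_neg at hcon
  obtain ⟨k0, hk0⟩ := hcon
  set J : Finset (Fin n) := Finset.univ.filter (fun k => (∑ l, A k l) = m) with hJ
  have hiJ : i ∈ J := by simp [hJ, hm]
  have h1 : Jᶜ ≠ ∅ := by
    intro h
    have : k0 ∈ J := by
      have : k0 ∉ Jᶜ := by simp [h]
      simpa using this
    exact hk0 (by simpa [hJ] using this)
  have h2 : Jᶜ ≠ Finset.univ := by
    intro h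
    have : i ∈ Jᶜ := h ▸ Finset.mem_univ i
    simp [hiJ] at this
  obtain ⟨j, hjJc, k, hkJ, hAjk⟩ := hirr Jᶜ h1 h2
  rw [compl_compl] at hkJ
  have hkm : (∑ l, A k l) = m := by simpa [hJ] using hkJ
  have : (∑ l, A j l) = m := key k hkm j hAjk
  have : j ∈ J := by simp [hJ, this]
  simp [this] at hjJc
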